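/- Let n = 3, let A be the adjacency matrix of the complete graph on 3 vertices (a_{ij} = 1 for i ≠ j, a_{ii} = 0), and let s ≡ −1. Then the three Coxeter generators s_1, s_2, s_3 are invertible 3×3 real matrices, and the subgroup of GL(3, ℝ) they generate is isomorphic to the symmetric group on 4 letters; in particular, it is finite of order 24. -/

import Mathlib

open Matrix

noncomputable section

def coxGen (n : ℕ) (A : Matrix (Fin n) (Fin n) ℝ) (s : Fin n → ℝ) (i : Fin n) :
    Matrix (Fin n) (Fin n) ℝ :=
  fun j k =>
    if j = i then (if k = i then -1 else s i * A i k)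
    else (if j = k then 1 else 0)

def K3 : Matrix (Fin 3) (Fin 3) ℝ := fun i j => if i = j then 0 else 1

def negSign : Fin 3 → ℝ := fun _ => -1

/-- Integer standard-representation matrix of a permutation of 4 letters. -/
def Mz (σ : Equiv.Perm (Fin 4)) : Matrix (Fin 3) (Fin 3) ℤ :=
  Matrix.of fun i j => (if σ j.castSucc = i.castSucc then 1 else 0)
    - (if σ (Fin.last 3) = i.castSucc then 1 else 0)

set_option maxRecDepth 10000 in
lemma Mz_mul : ∀ σ τ : Equiv.Perm (Fin 4), Mz (σ * τ) = Mz σ * Mz τ := by decide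

lemma Mz_one : Mz 1 = 1 := by decide

lemma Mz_inj : ∀ σ : Equiv.Perm (Fin 4), Mz σ = 1 → σ = 1 := by decide

/-- Real version. -/
def Mr (σ : Equiv.Perm (Fin 4)) : Matrix (Fin 3) (Fin 3) ℝ :=
  (Mz σ).map (Int.castRingHom ℝ)

lemma Mr_mul (σ τ : Equiv.Perm (Fin 4)) : Mr (σ * τ) = Mr σ * Mr τ := by
  simp only [Mr, Mz_mul, Matrix.map_mul]

lemma Mr_one : Mr 1 = 1 := by
  simp only [Mr, Mz_one]
  exact Matrix.map_one _ (map_zero _) (map_one _)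

/-- The standard representation as a homomorphism into `GL (Fin 3) ℝ`. -/
def stdRep : Equiv.Perm (Fin 4) →* GL (Fin 3) ℝ where
  toFun σ := ⟨Mr σ, Mr σ⁻¹,
    by rw [← Mr_mul, mul_inv_cancel, Mr_one],
    by rw [← Mr_mul, inv_mul_cancel, Mr_one]⟩
  map_one' := Units.ext (by simp [Mr_one])
  map_mul' σ τ := Units.ext (Mr_mul σ τ)

lemma stdRep_inj : Function.Injective stdRep := by
  rw [injective_iff_map_eq_one]
  intro σ h
  apply Mz_inj
  have hv : Mr σ = 1 := congrArg Units.val h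
  have : (Mz σ).map (Int.castRingHom ℝ) = (1 : Matrix (Fin 3) (Fin 3) ℤ).map (Int.castRingHom ℝ) := by
    rw [Matrix.map_one _ (map_zero _) (map_one _)]
    exact hv
  exact Matrix.map_injective Int.cast_injective this

def T : Fin 3 → Equiv.Perm (Fin 4) := fun i => Equiv.swap i.castSucc (Fin.last 3)

def g4 : Fin 4 → Fin 3 := ![0, 1, 2, 0]

/-- A word in the star transpositions equal to `swap c d`. -/
def w (c d : Fin 4) : Equiv.Perm (Fin 4) :=
  if c = d then 1
  else if c = Fin.last 3 then T (g4 d)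
  else if d = Fin.last 3 then T (g4 c)
  else T (g4 c) * T (g4 d) * T (g4 c)

lemma swap_eq_w : ∀ c d : Fin 4, Equiv.swap c d = w c d := by decide

lemma w_mem (c d : Fin 4) : w c d ∈ Subgroup.closure (Set.range T) := by
  have mem : ∀ i, T i ∈ Subgroup.closure (Set.range T) :=
    fun i => Subgroup.subset_closure ⟨i, rfl⟩
  unfold w
  split_ifs <;>
    first
      | exact one_mem _
      | exact mem _
      | exact mul_mem (mul_mem (mem _) (mem _)) (mem _)

lemma closure_T : Subgroup.closure (Set.range T) = ⊤ := by
  rw [eq_top_iff, ← Equiv.Perm.closure_isSwap, Subgroup.closure_le]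
  rintro σ ⟨a, b, hab, rfl⟩
  rw [swap_eq_w]
  exact w_mem a b

set_option linter.unusedTactic false in
lemma stdRep_T_coe (i : Fin 3) :
    ((stdRep (T i) : GL (Fin 3) ℝ) : Matrix (Fin 3) (Fin 3) ℝ) = coxGen 3 K3 negSign i := by
  ext j k
  fin_cases i <;> fin_cases j <;> fin_cases k <;>
    simp [stdRep, Mr, Mz, T, coxGen, K3, negSign, Equiv.swap_apply_def, Fin.last] <;> norm_num [Fin.ext_iff] <;> decide

theorem stmt_8 :
    (∀ i : Fin 3, IsUnit (coxGen 3 K3 negSign i)) ∧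
    ∃ u : Fin 3 → GL (Fin 3) ℝ,
      (∀ i : Fin 3, (u i : Matrix (Fin 3) (Fin 3) ℝ) = coxGen 3 K3 negSign i) ∧
      Nonempty ((Subgroup.closure (Set.range u) : Subgroup (GL (Fin 3) ℝ))
        ≃* Equiv.Perm (Fin 4)) ∧
      Nat.card (Subgroup.closure (Set.range u) : Subgroup (GL (Fin 3) ℝ)) = 24 := by
  set u : Fin 3 → GL (Fin 3) ℝ := fun i => stdRep (T i) with hu
  have hcoe : ∀ i : Fin 3, (u i : Matrix (Fin 3) (Fin 3) ℝ) = coxGen 3 K3 negSign i :=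
    stdRep_T_coe
  have hclos : Subgroup.closure (Set.range u) = stdRep.range := by
    rw [MonoidHom.range_eq_map, ← closure_T, MonoidHom.map_closure, hu]
    congr 1
    rw [← Set.range_comp]
    rfl
  have e : (Subgroup.closure (Set.range u) : Subgroup (GL (Fin 3) ℝ)) ≃* Equiv.Perm (Fin 4) :=
    (MulEquiv.subgroupCongr hclos).trans (MonoidHom.ofInjective stdRep_inj).symm
  refine ⟨fun i => ?_, u, hcoe, ⟨e⟩, ?_⟩
  · rw [← hcoe i]; exact (u i).isUnit
  · rw [Nat.card_congr e.toEquiv]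
    simp [Nat.card_eq_fintype_card, Fintype.card_perm, Fintype.card_fin]
    rfl

end
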